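/- arXiv:2505.09360 — 2 statements merged into one kernel-verified Lean document; each statement's English description precedes it below -/
import Mathlib

section
/- Let $a_k, b_k, c_k, d_k \in \mathbb{Z}$ with $|a_k d_k - b_k c_k| = 1$, and suppose $-d_k - c_k \equiv a_k + b_k \pmod{3}$ (i.e. $D_k \in \Gamma_1$). Then for the digit set $D_k = \{(0,0)^t, (a_k,b_k)^t, (c_k,d_k)^t\}$, the zero set of the mask polynomial satisfies $\mathcal{Z}(m_{D_k}) = \left(\frac{1}{3}(1,1)^t + \mathbb{Z}^2\right) \cup \left(\frac{2}{3}(1,1)^t + \mathbb{Z}^2\right)$. -/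
/-- The mask polynomial of a finite digit set `D ⊂ ℤ²`. -/
noncomputable def maskPoly (D : Finset (ℤ × ℤ)) (ξ : ℝ × ℝ) : ℂ :=
  (D.card : ℂ)⁻¹ * ∑ w ∈ D, Complex.exp (2 * (Real.pi : ℂ) * Complex.I *
    ((ξ.1 * w.1 + ξ.2 * w.2 : ℝ) : ℂ))


noncomputable def eC (x : ℝ) : ℂ := Complex.exp (2 * (Real.pi : ℂ) * Complex.I * (x : ℂ))

lemma eC_add (x y : ℝ) : eC (x + y) = eC x * eC y := by
  rw [eC, eC, eC, ← Complex.exp_add]; push_cast; ring_nf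

lemma eC_int (k : ℤ) : eC k = 1 := by
  rw [eC, show (2 * (Real.pi : ℂ) * Complex.I * ((k : ℝ) : ℂ)) = (k : ℂ) * (2 * Real.pi * Complex.I) by push_cast; ring]
  exact Complex.exp_int_mul_two_pi_mul_I k

lemma two_pi_I_ne_zero : (2 * (Real.pi : ℂ) * Complex.I) ≠ 0 := by
  refine mul_ne_zero (mul_ne_zero two_ne_zero ?_) Complex.I_ne_zero
  exact_mod_cast Real.pi_ne_zero

lemma eC_eq_one_iff (x : ℝ) : eC x = 1 ↔ ∃ k : ℤ, x = k := by
  rw [eC, Complex.exp_eq_one_iff]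
  constructor
  · rintro ⟨n, hn⟩
    refine ⟨n, ?_⟩
    have : ((x : ℂ)) = (n : ℂ) := by
      have h := hn
      rw [show (2 * (Real.pi : ℂ) * Complex.I * (x:ℂ)) = (x:ℂ) * (2 * Real.pi * Complex.I) by ring] at h
      exact mul_right_cancel₀ two_pi_I_ne_zero h
    exact_mod_cast this
  · rintro ⟨k, rfl⟩
    exact ⟨k, by push_cast; ring⟩

lemma eC_conj (x : ℝ) : (starRingEnd ℂ) (eC x) = eC (-x) := by
  rw [eC, ← Complex.exp_conj, eC]
  congr 1
  simp only [map_mul, Complex.conj_I, Complex.conj_ofReal, map_ofNat]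
  push_cast
  ring

lemma eC_three (x : ℝ) : eC (3 * x) = eC x ^ 3 := by
  rw [show 3 * x = x + (x + x) by ring, eC_add, eC_add]; ring

lemma keyA (x y : ℝ) :
    1 + eC x + eC y = 0 ↔
    ∃ m n : ℤ, 3 * x = m ∧ 3 * y = n ∧ ¬ ((3:ℤ) ∣ m) ∧ (3:ℤ) ∣ (m + n) := by
  constructor
  · intro h
    have hux : eC x * eC (-x) = 1 := by rw [← eC_add]; simpa using eC_int 0
    have huy : eC y * eC (-y) = 1 := by rw [← eC_add]; simpa using eC_int 0
    have h' : 1 + eC (-x) + eC (-y) = 0 := by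
      have := congrArg (starRingEnd ℂ) h
      simpa [eC_conj] using this
    have hv : eC y = -1 - eC x := by linear_combination h
    have hu' : eC (-x) = -1 - eC x := by
      linear_combination huy - hux - eC (-y) * h + (1 + eC x) * h'
    have hq : eC x ^ 2 + eC x + 1 = 0 := by
      linear_combination eC x * hu' - hux
    have hu3 : eC x ^ 3 = 1 := by linear_combination (eC x - 1) * hq
    obtain ⟨m, hm⟩ := (eC_eq_one_iff (3 * x)).mp (by rw [eC_three]; exact hu3)
    have hxy : eC (x + y) = 1 := by
      rw [eC_add]; linear_combination hux + eC x * hv - eC x * hu'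
    obtain ⟨k, hk⟩ := (eC_eq_one_iff (x + y)).mp hxy
    refine ⟨m, 3 * k - m, hm, by push_cast; linarith, ?_, ⟨k, by ring⟩⟩
    rintro ⟨j, rfl⟩
    have hxj : x = j := by
      have : (3 : ℝ) * x = 3 * j := by rw [hm]; push_cast; ring
      linarith
    rw [hxj] at hq
    rw [eC_int j] at hq
    norm_num at hq
  · rintro ⟨m, n, hm, hn, h3m, hmn⟩
    have hu3 : eC x ^ 3 = 1 := by rw [← eC_three, hm]; exact eC_int m
    have hu_ne : eC x ≠ 1 := by
      intro h1
      obtain ⟨k, hk⟩ := (eC_eq_one_iff x).mp h1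
      refine h3m ⟨k, ?_⟩
      have : (m : ℝ) = ((3 * k : ℤ) : ℝ) := by rw [← hm, hk]; push_cast; ring
      exact_mod_cast this
    have hq : eC x ^ 2 + eC x + 1 = 0 := by
      rcases mul_eq_zero.mp (show (eC x - 1) * (eC x ^ 2 + eC x + 1) = 0 by
        linear_combination hu3) with h0 | h0
      · exact absurd (by linear_combination h0) hu_ne
      · exact h0
    obtain ⟨k, hk⟩ := hmn
    have hxy : x + y = (k : ℝ) := by
      have h1 : (3:ℝ) * (x + y) = ((m : ℝ) + n) := by rw [← hm, ← hn]; ring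
      have h2 : ((m:ℝ) + n) = 3 * k := by exact_mod_cast congrArg (Int.cast : ℤ → ℝ) hk
      linarith
    have huv : eC x * eC y = 1 := by rw [← eC_add, hxy]; exact eC_int k
    have hvy : eC y = eC x ^ 2 := by
      linear_combination (-(eC y)) * hu3 + eC x ^ 2 * huv
    rw [hvy]; linear_combination hq

-- auxiliary: (a+b) not divisible by 3
lemma hab_ne (a b c d : ℤ) (hdet : |a * d - b * c| = 1)
    (h3 : (3:ℤ) ∣ (a + b + c + d)) : ((a : ZMod 3) + b) ≠ 0 := by
  intro hAB
  have h0 : ((a : ZMod 3) + b + c + d) = 0 := by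
    have := (ZMod.intCast_zmod_eq_zero_iff_dvd (a+b+c+d) 3).mpr (by exact_mod_cast h3)
    push_cast at this; linear_combination this
  have hCD : ((c : ZMod 3) + d) = 0 := by linear_combination h0 - hAB
  have hz : ((a : ZMod 3) * d - b * c) = 0 := by
    linear_combination (-(c : ZMod 3)) * hAB + (a : ZMod 3) * hCD
  have hdet' : a * d - b * c = 1 ∨ a * d - b * c = -1 := abs_eq (by norm_num) |>.mp hdet
  have hz' : ((a * d - b * c : ℤ) : ZMod 3) = 0 := by push_cast; linear_combination hz
  rcases hdet' with h | h <;> rw [h] at hz' <;> revert hz' <;> decide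

lemma dvd3_iff (s : ℤ) : (3:ℤ) ∣ s ↔ ((s : ZMod 3) = 0) := by
  rw [ZMod.intCast_zmod_eq_zero_iff_dvd]; norm_num

lemma lemB (a b c d : ℤ) (hdet : |a * d - b * c| = 1)
    (h3 : (3:ℤ) ∣ (a + b + c + d)) (p q : ℝ) :
    (∃ m n : ℤ, 3 * (p * a + q * b) = m ∧ 3 * (p * c + q * d) = n ∧
        ¬ ((3:ℤ) ∣ m) ∧ (3:ℤ) ∣ (m + n)) ↔
    (∃ s t : ℤ, 3 * p = s ∧ 3 * q = t ∧ ¬ ((3:ℤ) ∣ s) ∧ (3:ℤ) ∣ (s - t)) := by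
  have hAB := hab_ne a b c d hdet h3
  have h0 : ((a : ZMod 3) + b + c + d) = 0 := by
    have := (dvd3_iff _).mp h3; push_cast at this; linear_combination this
  have hdet2 : (a * d - b * c) * (a * d - b * c) = 1 := by
    rcases abs_eq (by norm_num : (0:ℤ) ≤ 1) |>.mp hdet with h | h <;> rw [h] <;> ring
  constructor
  · rintro ⟨m, n, hm, hn, h3m, hmn⟩
    have hdet2' : ((a:ℝ) * d - b * c) * ((a:ℝ) * d - b * c) = 1 := by exact_mod_cast hdet2
    have hmn' : ((m : ZMod 3) + n) = 0 := by
      have := (dvd3_iff _).mp hmn; push_cast at this; linear_combination this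
    refine ⟨(a * d - b * c) * (d * m - b * n), (a * d - b * c) * (a * n - c * m), ?_, ?_, ?_, ?_⟩
    · push_cast
      linear_combination (((a:ℝ) * d - b * c) * d) * hm - (((a:ℝ) * d - b * c) * b) * hn - 3 * p * hdet2'
    · push_cast
      linear_combination (-((a:ℝ) * d - b * c) * c) * hm + (((a:ℝ) * d - b * c) * a) * hn - 3 * q * hdet2'
    · -- ¬ 3 ∣ s
      rw [dvd3_iff]
      intro hs0
      have hst : (((a * d - b * c) * (d * m - b * n) : ℤ) : ZMod 3)
          - (((a * d - b * c) * (a * n - c * m) : ℤ) : ZMod 3) = 0 := by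
        push_cast
        linear_combination (((a:ZMod 3) * d - b * c) * m) * h0 -
          (((a:ZMod 3) * d - b * c) * ((a:ZMod 3) + b)) * hmn'
      have ht0 : (((a * d - b * c) * (a * n - c * m) : ℤ) : ZMod 3) = 0 := by
        linear_combination hs0 - hst
      have hm_id : (m : ZMod 3) = a * ((a * d - b * c) * (d * m - b * n) : ℤ)
          + b * ((a * d - b * c) * (a * n - c * m) : ℤ) := by
        have h5 : m = a * ((a * d - b * c) * (d * m - b * n))
            + b * ((a * d - b * c) * (a * n - c * m)) := by
          linear_combination (-m) * hdet2
        exact_mod_cast congrArg (Int.cast : ℤ → ZMod 3) h5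
      rw [hs0, ht0] at hm_id
      simp at hm_id
      exact h3m ((dvd3_iff m).mpr hm_id)
    · rw [dvd3_iff]
      push_cast
      linear_combination (((a:ZMod 3) * d - b * c) * m) * h0 -
        (((a:ZMod 3) * d - b * c) * ((a:ZMod 3) + b)) * hmn'
  · rintro ⟨s, t, hs, ht, h3s, hst⟩
    refine ⟨a * s + b * t, c * s + d * t, ?_, ?_, ?_, ?_⟩
    · push_cast; linear_combination (a:ℝ) * hs + (b:ℝ) * ht
    · push_cast; linear_combination (c:ℝ) * hs + (d:ℝ) * ht
    · rw [dvd3_iff]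
      have hst' : ((s : ZMod 3)) = t := by
        have := (dvd3_iff _).mp hst; push_cast at this; linear_combination this
      have hs0 : ((s : ZMod 3)) ≠ 0 := fun h => h3s ((dvd3_iff s).mpr h)
      push_cast
      rw [← hst']
      intro hcon
      have : ((a : ZMod 3) + b) * s = 0 := by linear_combination hcon
      rcases mul_eq_zero.mp this with h | h
      · exact hAB h
      · exact hs0 h
    · rw [dvd3_iff]
      have hst' : ((s : ZMod 3)) = t := by
        have := (dvd3_iff _).mp hst; push_cast at this; linear_combination this
      push_cast
      rw [← hst']
      linear_combination (s : ZMod 3) * h0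

lemma rhs_iff (ξ : ℝ × ℝ) :
    ((∃ z : ℤ × ℤ, ξ = (1/3 + (z.1:ℝ), 1/3 + (z.2:ℝ)))
      ∨ (∃ z : ℤ × ℤ, ξ = (2/3 + (z.1:ℝ), 2/3 + (z.2:ℝ)))) ↔
    ∃ s t : ℤ, 3 * ξ.1 = s ∧ 3 * ξ.2 = t ∧ ¬ ((3:ℤ) ∣ s) ∧ (3:ℤ) ∣ (s - t) := by
  constructor
  · rintro (⟨z, rfl⟩ | ⟨z, rfl⟩)
    · exact ⟨1 + 3 * z.1, 1 + 3 * z.2, by push_cast; ring, by push_cast; ring,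
        by omega, by omega⟩
    · exact ⟨2 + 3 * z.1, 2 + 3 * z.2, by push_cast; ring, by push_cast; ring,
        by omega, by omega⟩
  · rintro ⟨s, t, hs, ht, h3s, hst⟩
    obtain ⟨p, q⟩ := ξ
    simp only at hs ht
    have hr : s % 3 = 1 ∨ s % 3 = 2 := by omega
    rcases hr with hr | hr
    · left
      refine ⟨((s - 1) / 3, (t - 1) / 3), ?_⟩
      have hks : s = 3 * ((s - 1) / 3) + 1 := by omega
      have hkt : t = 3 * ((t - 1) / 3) + 1 := by omega
      simp only [Prod.mk.injEq]
      constructor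
      · have : (s : ℝ) = 3 * ((s - 1) / 3 : ℤ) + 1 := by exact_mod_cast hks
        rw [this] at hs; linarith
      · have : (t : ℝ) = 3 * ((t - 1) / 3 : ℤ) + 1 := by exact_mod_cast hkt
        rw [this] at ht; linarith
    · right
      refine ⟨((s - 2) / 3, (t - 2) / 3), ?_⟩
      have hks : s = 3 * ((s - 2) / 3) + 2 := by omega
      have hkt : t = 3 * ((t - 2) / 3) + 2 := by omega
      simp only [Prod.mk.injEq]
      constructor
      · have : (s : ℝ) = 3 * ((s - 2) / 3 : ℤ) + 2 := by exact_mod_cast hks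
        rw [this] at hs; linarith
      · have : (t : ℝ) = 3 * ((t - 2) / 3 : ℤ) + 2 := by exact_mod_cast hkt
        rw [this] at ht; linarith

/-- For a digit set `D = {(0,0),(a,b),(c,d)} ∈ Γ₁` with `|ad - bc| = 1`, the zero set of the
mask polynomial is `(1/3)(1,1)ᵗ + ℤ² ∪ (2/3)(1,1)ᵗ + ℤ²`. -/
theorem stmt4 (a b c d : ℤ) (hdet : |a * d - b * c| = 1)
    (hΓ : (-d - c) ≡ (a + b) [ZMOD 3]) :
    {ξ : ℝ × ℝ | maskPoly ({(0,0), (a,b), (c,d)} : Finset (ℤ × ℤ)) ξ = 0} =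
      {ξ : ℝ × ℝ | ∃ z : ℤ × ℤ, ξ = (1/3 + (z.1:ℝ), 1/3 + (z.2:ℝ))} ∪
      {ξ : ℝ × ℝ | ∃ z : ℤ × ℤ, ξ = (2/3 + (z.1:ℝ), 2/3 + (z.2:ℝ))} := by
  have h3 : (3:ℤ) ∣ (a + b + c + d) := by
    have := Int.ModEq.dvd hΓ
    omega
  have hab0 : ((a, b) : ℤ × ℤ) ≠ (0, 0) := by
    rintro h
    rw [Prod.mk.injEq] at h
    obtain ⟨rfl, rfl⟩ := h
    simp at hdet
  have hcd0 : ((c, d) : ℤ × ℤ) ≠ (0, 0) := by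
    rintro h
    rw [Prod.mk.injEq] at h
    obtain ⟨rfl, rfl⟩ := h
    simp at hdet
  have habcd : ((a, b) : ℤ × ℤ) ≠ (c, d) := by
    rintro h
    rw [Prod.mk.injEq] at h
    obtain ⟨rfl, rfl⟩ := h
    simp [mul_comm] at hdet
  have h1 : ((0,0) : ℤ × ℤ) ∉ ({(a,b), (c,d)} : Finset (ℤ × ℤ)) := by
    simp only [Finset.mem_insert, Finset.mem_singleton]
    push_neg
    exact ⟨fun h => hab0 h.symm, fun h => hcd0 h.symm⟩
  have h2 : ((a,b) : ℤ × ℤ) ∉ ({(c,d)} : Finset (ℤ × ℤ)) := by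
    simpa using habcd
  have hmask : ∀ ξ : ℝ × ℝ, maskPoly ({(0,0), (a,b), (c,d)} : Finset (ℤ × ℤ)) ξ
      = (3 : ℂ)⁻¹ * (1 + eC (ξ.1 * a + ξ.2 * b) + eC (ξ.1 * c + ξ.2 * d)) := by
    intro ξ
    rw [maskPoly, Finset.sum_insert h1, Finset.sum_insert h2, Finset.sum_singleton,
      Finset.card_insert_of_notMem h1, Finset.card_insert_of_notMem h2,
      Finset.card_singleton]
    norm_num [eC]
    ring
  ext ξ
  simp only [Set.mem_setOf_eq, Set.mem_union]
  rw [hmask ξ, mul_eq_zero]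
  have h3i : ((3:ℂ)⁻¹ ≠ 0) := by norm_num
  rw [or_iff_right h3i]
  rw [keyA, lemB a b c d hdet h3, ← rhs_iff]
end

section
/- Let $a_k, b_k, c_k, d_k \in \mathbb{Z}$ with $|a_k d_k - b_k c_k| = 1$, and suppose $d_k - c_k \equiv a_k - b_k \pmod{3}$ (i.e. $D_k \in \Gamma_2$). Then for the digit set $D_k = \{(0,0)^t, (a_k,b_k)^t, (c_k,d_k)^t\}$, the zero set of the mask polynomial satisfies $\mathcal{Z}(m_{D_k}) = \left(\frac{1}{3}(1,2)^t + \mathbb{Z}^2\right) \cup \left(\frac{2}{3}(1,2)^t + \mathbb{Z}^2\right)$. -/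
open Complex

private lemma conj_arg' (t : ℝ) :
    (starRingEnd ℂ) (2 * (Real.pi : ℂ) * I * (t : ℂ)) = -(2 * (Real.pi : ℂ) * I * (t : ℂ)) := by
  simp only [map_mul, Complex.conj_I, Complex.conj_ofReal, map_ofNat]
  ring

private lemma exp_eq_one_iff_int (t : ℝ) :
    Complex.exp (2 * (Real.pi : ℂ) * I * (t : ℂ)) = 1 ↔ ∃ k : ℤ, t = k := by
  rw [Complex.exp_eq_one_iff]
  constructor
  · rintro ⟨k, hk⟩
    refine ⟨k, ?_⟩
    have h2 : (t : ℂ) = k := by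
      refine mul_left_cancel₀ Complex.two_pi_I_ne_zero ?_
      linear_combination hk
    exact_mod_cast h2
  · rintro ⟨k, hk⟩
    exact ⟨k, by rw [hk]; push_cast; ring⟩

private lemma exp_shift (t : ℝ) (m : ℤ) :
    Complex.exp (2 * (Real.pi : ℂ) * I * ((t + m : ℝ) : ℂ))
      = Complex.exp (2 * (Real.pi : ℂ) * I * (t : ℂ)) := by
  rw [show 2 * (Real.pi : ℂ) * I * ((t + m : ℝ) : ℂ)
      = 2 * (Real.pi : ℂ) * I * (t : ℂ) + (m : ℂ) * (2 * (Real.pi:ℂ) * I) by push_cast; ring,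
    Complex.exp_add, Complex.exp_int_mul_two_pi_mul_I, mul_one]

private lemma sum_three (x y : ℝ) :
    1 + Complex.exp (2 * (Real.pi : ℂ) * I * (x : ℂ))
      + Complex.exp (2 * (Real.pi : ℂ) * I * (y : ℂ)) = 0 ↔
    ∃ m n : ℤ, (x = 1/3 + m ∧ y = 2/3 + n) ∨ (x = 2/3 + m ∧ y = 1/3 + n) := by
  set u := Complex.exp (2 * (Real.pi : ℂ) * I * (x : ℂ)) with hu
  set v := Complex.exp (2 * (Real.pi : ℂ) * I * (y : ℂ)) with hv
  constructor
  · intro h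
    have hcu : (starRingEnd ℂ) u = u⁻¹ := by
      rw [hu, ← Complex.exp_conj, ← Complex.exp_neg, conj_arg']
    have hcv : (starRingEnd ℂ) v = v⁻¹ := by
      rw [hv, ← Complex.exp_conj, ← Complex.exp_neg, conj_arg']
    have hune : u ≠ 0 := Complex.exp_ne_zero _
    have hvne : v ≠ 0 := Complex.exp_ne_zero _
    have hconj : 1 + u⁻¹ + v⁻¹ = 0 := by
      have := congrArg (starRingEnd ℂ) h
      simpa [map_add, hcu, hcv] using this
    have huv : u * v = 1 := by
      have h2 : u * v * (1 + u⁻¹ + v⁻¹) = 0 := by rw [hconj]; ring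
      have h3 : u * v + v + u = 0 := by
        field_simp at h2
        linear_combination h2
      linear_combination h3 - h
    have hvu : v = u⁻¹ := by field_simp at huv ⊢; linear_combination huv
    have hquad : u ^ 2 + u + 1 = 0 := by
      have h2 : u * (1 + u + v) = 0 := by rw [h]; ring
      rw [hvu] at h2
      field_simp at h2
      linear_combination h2
    have hu3 : u ^ 3 = 1 := by linear_combination (u - 1) * hquad
    have hune1 : u ≠ 1 := by
      intro h1
      rw [h1] at hquad
      norm_num at hquad
    obtain ⟨k, hk⟩ : ∃ k : ℤ, 3 * x = k := by
      rw [← exp_eq_one_iff_int]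
      rw [show ((3 * x : ℝ) : ℂ) = ((3:ℕ):ℂ) * (x:ℂ) by push_cast; ring]
      rw [← mul_assoc, mul_comm (2 * (Real.pi:ℂ) * I) ((3:ℕ):ℂ), mul_assoc,
        Complex.exp_nat_mul]
      exact hu3
    obtain ⟨j, hj⟩ : ∃ j : ℤ, y - 2 * x = j := by
      rw [← exp_eq_one_iff_int]
      have h2 : v * (Complex.exp (2 * (Real.pi : ℂ) * I * (x:ℂ)))⁻¹ ^ 2
          = Complex.exp (2 * (Real.pi:ℂ) * I * ((y - 2*x : ℝ):ℂ)) := by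
        rw [← Complex.exp_neg, ← Complex.exp_nat_mul, hv, ← Complex.exp_add]
        congr 1
        push_cast
        ring
      rw [← h2, hvu, hu, ← hu]
      calc u⁻¹ * u⁻¹ ^ 2 = (u ^ 3)⁻¹ := by rw [← inv_pow]; ring
        _ = 1 := by rw [hu3]; norm_num
    have hk3 : ¬ (3 ∣ k) := by
      rintro ⟨t, ht⟩
      apply hune1
      have hx : x = t := by
        have h2 : (k:ℝ) = 3 * t := by exact_mod_cast congrArg (Int.cast : ℤ → ℝ) ht
        linarith
      rw [hu, show ((x:ℝ):ℂ) = ((t:ℤ):ℂ) by exact_mod_cast congrArg Complex.ofReal hx,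
        mul_comm]
      exact Complex.exp_int_mul_two_pi_mul_I t
    have hk12 : k % 3 = 1 ∨ k % 3 = 2 := by omega
    rcases hk12 with hr | hr
    · refine ⟨(k-1)/3, 2*((k-1)/3) + j, Or.inl ⟨?_, ?_⟩⟩ <;>
      · have h1 : (k:ℝ) = 3 * ((k-1)/3 : ℤ) + 1 := by
          exact_mod_cast congrArg (Int.cast : ℤ → ℝ) (show k = 3 * ((k-1)/3) + 1 by omega)
        push_cast
        linarith
    · refine ⟨(k-2)/3, 2*((k-2)/3) + j + 1, Or.inr ⟨?_, ?_⟩⟩ <;>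
      · have h1 : (k:ℝ) = 3 * ((k-2)/3 : ℤ) + 2 := by
          exact_mod_cast congrArg (Int.cast : ℤ → ℝ) (show k = 3 * ((k-2)/3) + 2 by omega)
        push_cast
        linarith
  · rintro ⟨m, n, ⟨hx, hy⟩ | ⟨hx, hy⟩⟩ <;>
    · set ω := Complex.exp (2 * (Real.pi : ℂ) * I * ((1/3 : ℝ) : ℂ)) with hω
      have hω3 : ω ^ 3 = 1 := by
        rw [hω, ← Complex.exp_nat_mul,
          show ((3:ℕ):ℂ) * (2 * (Real.pi : ℂ) * I * ((1/3:ℝ) : ℂ)) = 2 * (Real.pi:ℂ) * I by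
            push_cast; ring]
        exact Complex.exp_two_pi_mul_I
      have hω1 : ω ≠ 1 := by
        intro h1
        rw [hω] at h1
        obtain ⟨k, hk⟩ := (exp_eq_one_iff_int _).mp h1
        have h2 : (1:ℝ) = 3 * k := by linarith
        have h3 : (1:ℤ) = 3 * k := by exact_mod_cast h2
        omega
      have hsum : 1 + ω + ω ^ 2 = 0 := by
        have h0 : (ω - 1) * (1 + ω + ω ^ 2) = 0 := by linear_combination hω3
        rcases mul_eq_zero.mp h0 with h | h
        · exact absurd (by linear_combination h) hω1
        · exact h
      have hω2 : Complex.exp (2 * (Real.pi : ℂ) * I * ((2/3 : ℝ) : ℂ)) = ω ^ 2 := by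
        rw [hω, ← Complex.exp_nat_mul]
        congr 1
        push_cast
        ring
      rw [hu, hv, hx, hy, exp_shift, exp_shift, hω2, ← hω]
      first
        | exact hsum
        | linear_combination hsum

/-- From `3ξ₁ = K`, `3ξ₂ = L` with the right residues mod 3, conclude membership in the
union of lattice translates. -/
private lemma conclude (ξ : ℝ × ℝ) (K L : ℤ) (hK : (3:ℝ) * ξ.1 = K) (hL : (3:ℝ) * ξ.2 = L)
    (h : (K % 3 = 1 ∧ L % 3 = 2) ∨ (K % 3 = 2 ∧ L % 3 = 1)) :
    (∃ z : ℤ × ℤ, ξ = (1/3 + (z.1:ℝ), 2/3 + (z.2:ℝ))) ∨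
    (∃ z : ℤ × ℤ, ξ = (2/3 + (z.1:ℝ), 4/3 + (z.2:ℝ))) := by
  rcases h with ⟨h1, h2⟩ | ⟨h1, h2⟩
  · left
    refine ⟨((K-1)/3, (L-2)/3), Prod.ext_iff.mpr ⟨?_, ?_⟩⟩
    · have e1 : (K:ℝ) = 1 + 3 * (((K-1)/3 : ℤ):ℝ) := by
        exact_mod_cast congrArg (Int.cast : ℤ → ℝ) (show K = 1 + 3*((K-1)/3) by omega)
      show ξ.1 = 1/3 + (((K-1)/3 : ℤ):ℝ)
      linarith
    · have e1 : (L:ℝ) = 2 + 3 * (((L-2)/3 : ℤ):ℝ) := by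
        exact_mod_cast congrArg (Int.cast : ℤ → ℝ) (show L = 2 + 3*((L-2)/3) by omega)
      show ξ.2 = 2/3 + (((L-2)/3 : ℤ):ℝ)
      linarith
  · right
    refine ⟨((K-2)/3, (L-4)/3), Prod.ext_iff.mpr ⟨?_, ?_⟩⟩
    · have e1 : (K:ℝ) = 2 + 3 * (((K-2)/3 : ℤ):ℝ) := by
        exact_mod_cast congrArg (Int.cast : ℤ → ℝ) (show K = 2 + 3*((K-2)/3) by omega)
      show ξ.1 = 2/3 + (((K-2)/3 : ℤ):ℝ)
      linarith
    · have e1 : (L:ℝ) = 4 + 3 * (((L-4)/3 : ℤ):ℝ) := by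
        exact_mod_cast congrArg (Int.cast : ℤ → ℝ) (show L = 4 + 3*((L-4)/3) by omega)
      show ξ.2 = 4/3 + (((L-4)/3 : ℤ):ℝ)
      linarith

private lemma conclude' (x y : ℝ) (K L : ℤ) (hK : (3:ℝ) * x = K) (hL : (3:ℝ) * y = L)
    (h : (K % 3 = 1 ∧ L % 3 = 2) ∨ (K % 3 = 2 ∧ L % 3 = 1)) :
    ∃ m n : ℤ, (x = 1/3 + m ∧ y = 2/3 + n) ∨ (x = 2/3 + m ∧ y = 1/3 + n) := by
  rcases h with ⟨h1, h2⟩ | ⟨h1, h2⟩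
  · refine ⟨(K-1)/3, (L-2)/3, Or.inl ⟨?_, ?_⟩⟩
    · have e1 : (K:ℝ) = 1 + 3 * (((K-1)/3 : ℤ):ℝ) := by
        exact_mod_cast congrArg (Int.cast : ℤ → ℝ) (show K = 1 + 3*((K-1)/3) by omega)
      linarith
    · have e1 : (L:ℝ) = 2 + 3 * (((L-2)/3 : ℤ):ℝ) := by
        exact_mod_cast congrArg (Int.cast : ℤ → ℝ) (show L = 2 + 3*((L-2)/3) by omega)
      linarith
  · refine ⟨(K-2)/3, (L-1)/3, Or.inr ⟨?_, ?_⟩⟩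
    · have e1 : (K:ℝ) = 2 + 3 * (((K-2)/3 : ℤ):ℝ) := by
        exact_mod_cast congrArg (Int.cast : ℤ → ℝ) (show K = 2 + 3*((K-2)/3) by omega)
      linarith
    · have e1 : (L:ℝ) = 1 + 3 * (((L-1)/3 : ℤ):ℝ) := by
        exact_mod_cast congrArg (Int.cast : ℤ → ℝ) (show L = 1 + 3*((L-1)/3) by omega)
      linarith

set_option maxHeartbeats 1600000 in
/-- For a digit set `D = {(0,0),(a,b),(c,d)} ∈ Γ₂` with `|ad - bc| = 1`, the zero set of the
mask polynomial is `(1/3)(1,2)ᵗ + ℤ² ∪ (2/3)(1,2)ᵗ + ℤ²`. -/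
theorem stmt5 (a b c d : ℤ) (hdet : |a * d - b * c| = 1)
    (hΓ : (d - c) ≡ (a - b) [ZMOD 3]) :
    {ξ : ℝ × ℝ | maskPoly ({(0,0), (a,b), (c,d)} : Finset (ℤ × ℤ)) ξ = 0} =
      {ξ : ℝ × ℝ | ∃ z : ℤ × ℤ, ξ = (1/3 + (z.1:ℝ), 2/3 + (z.2:ℝ))} ∪
      {ξ : ℝ × ℝ | ∃ z : ℤ × ℤ, ξ = (2/3 + (z.1:ℝ), 4/3 + (z.2:ℝ))} := by
  obtain ⟨e, he⟩ : ∃ e : ℤ, d - c = (a - b) + 3 * e := by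
    obtain ⟨t, ht⟩ := Int.ModEq.dvd hΓ
    exact ⟨-t, by omega⟩
  have habs : a*d - b*c = 1 ∨ a*d - b*c = -1 := (abs_eq (by norm_num)).mp hdet
  have h3ab : ¬ ((3:ℤ) ∣ (a - b)) := by
    rintro ⟨t, ht⟩
    have hdvd : a*d - b*c = 3*(a*t + a*e + t*c) := by linear_combination a*he + (a+c)*ht
    rcases habs with h | h <;> rw [h] at hdvd <;> omega
  have h3ac : ¬ ((3:ℤ) ∣ (a + c)) := by
    rintro ⟨t, ht⟩
    have hdvd : a*d - b*c = 3*((d-c)*t - c*e) := by linear_combination (d-c)*ht - c*he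
    rcases habs with h | h <;> rw [h] at hdvd <;> omega
  have hab0 : ¬(a = 0 ∧ b = 0) := by
    rintro ⟨rfl, rfl⟩; norm_num at hdet
  have hcd0 : ¬(c = 0 ∧ d = 0) := by
    rintro ⟨rfl, rfl⟩; norm_num at hdet
  have habcd : ¬(a = c ∧ b = d) := by
    rintro ⟨h1, h2⟩
    have h0 : a*d - b*c = 0 := by rw [h1, h2]; ring
    rw [h0] at hdet
    norm_num at hdet
  have hmem1 : ((0,0) : ℤ×ℤ) ∉ ({(a,b),(c,d)} : Finset (ℤ×ℤ)) := by
    simp only [Finset.mem_insert, Finset.mem_singleton, Prod.mk.injEq]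
    omega
  have hmem2 : ((a,b) : ℤ×ℤ) ∉ ({(c,d)} : Finset (ℤ×ℤ)) := by
    simp only [Finset.mem_singleton, Prod.mk.injEq]
    omega
  have hchar : ∀ ξ : ℝ × ℝ, maskPoly ({(0,0), (a,b), (c,d)} : Finset (ℤ × ℤ)) ξ = 0 ↔
      ∃ m n : ℤ, (ξ.1 * (a:ℝ) + ξ.2 * (b:ℝ) = 1/3 + m ∧ ξ.1 * (c:ℝ) + ξ.2 * (d:ℝ) = 2/3 + n)
        ∨ (ξ.1 * (a:ℝ) + ξ.2 * (b:ℝ) = 2/3 + m ∧ ξ.1 * (c:ℝ) + ξ.2 * (d:ℝ) = 1/3 + n) := by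
    intro ξ
    rw [← sum_three]
    have hmp : maskPoly ({(0,0), (a,b), (c,d)} : Finset (ℤ × ℤ)) ξ
        = (3:ℂ)⁻¹ * (1 + Complex.exp (2 * (Real.pi : ℂ) * I * ((ξ.1 * (a:ℝ) + ξ.2 * (b:ℝ) : ℝ) : ℂ))
          + Complex.exp (2 * (Real.pi : ℂ) * I * ((ξ.1 * (c:ℝ) + ξ.2 * (d:ℝ) : ℝ) : ℂ))) := by
      unfold maskPoly
      rw [Finset.sum_insert hmem1, Finset.sum_insert hmem2, Finset.sum_singleton,
        Finset.card_insert_of_notMem hmem1, Finset.card_insert_of_notMem hmem2,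
        Finset.card_singleton]
      norm_num
      ring
    rw [hmp, mul_eq_zero]
    constructor
    · rintro (h0 | h0)
      · norm_num at h0
      · exact h0
    · exact Or.inr
  ext ξ
  simp only [Set.mem_union, Set.mem_setOf_eq]
  rw [hchar ξ]
  constructor
  · rintro ⟨m, n, ⟨hx, hy⟩ | ⟨hx, hy⟩⟩ <;> rcases habs with hd1 | hd1
    -- Case A, det = 1
    · have hdR : (a:ℝ)*d - (b:ℝ)*c = 1 := by exact_mod_cast hd1
      obtain ⟨P, hP⟩ : ∃ P : ℤ, d*m - b*n = P := ⟨_, rfl⟩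
      obtain ⟨Q, hQ⟩ : ∃ Q : ℤ, a*n - c*m = Q := ⟨_, rfl⟩
      have hx1 : (3:ℝ) * ξ.1 = ((d - 2*b + 3*P : ℤ) : ℝ) := by
        rw [← hP]; push_cast
        linear_combination (3*(d:ℝ))*hx - (3*(b:ℝ))*hy - 3*ξ.1*hdR
      have hy1 : (3:ℝ) * ξ.2 = ((2*a - c + 3*Q : ℤ) : ℝ) := by
        rw [← hQ]; push_cast
        linear_combination (-3*(c:ℝ))*hx + (3*(a:ℝ))*hy - 3*ξ.2*hdR
      refine conclude ξ _ _ hx1 hy1 ?_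
      have hs : (a+c) % 3 = 1 ∨ (a+c) % 3 = 2 := by omega
      clear hP hQ
      rcases hs with hs | hs
      · exact Or.inl ⟨by omega, by omega⟩
      · exact Or.inr ⟨by omega, by omega⟩
    -- Case A, det = -1
    · have hdR : (a:ℝ)*d - (b:ℝ)*c = -1 := by exact_mod_cast hd1
      obtain ⟨P, hP⟩ : ∃ P : ℤ, b*n - d*m = P := ⟨_, rfl⟩
      obtain ⟨Q, hQ⟩ : ∃ Q : ℤ, c*m - a*n = Q := ⟨_, rfl⟩
      have hx1 : (3:ℝ) * ξ.1 = ((2*b - d + 3*P : ℤ) : ℝ) := by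
        rw [← hP]; push_cast
        linear_combination (-3*(d:ℝ))*hx + (3*(b:ℝ))*hy + 3*ξ.1*hdR
      have hy1 : (3:ℝ) * ξ.2 = ((c - 2*a + 3*Q : ℤ) : ℝ) := by
        rw [← hQ]; push_cast
        linear_combination (3*(c:ℝ))*hx - (3*(a:ℝ))*hy + 3*ξ.2*hdR
      refine conclude ξ _ _ hx1 hy1 ?_
      have hs : (a+c) % 3 = 1 ∨ (a+c) % 3 = 2 := by omega
      clear hP hQ
      rcases hs with hs | hs
      · exact Or.inr ⟨by omega, by omega⟩
      · exact Or.inl ⟨by omega, by omega⟩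
    -- Case B, det = 1
    · have hdR : (a:ℝ)*d - (b:ℝ)*c = 1 := by exact_mod_cast hd1
      obtain ⟨P, hP⟩ : ∃ P : ℤ, d*m - b*n = P := ⟨_, rfl⟩
      obtain ⟨Q, hQ⟩ : ∃ Q : ℤ, a*n - c*m = Q := ⟨_, rfl⟩
      have hx1 : (3:ℝ) * ξ.1 = ((2*d - b + 3*P : ℤ) : ℝ) := by
        rw [← hP]; push_cast
        linear_combination (3*(d:ℝ))*hx - (3*(b:ℝ))*hy - 3*ξ.1*hdR
      have hy1 : (3:ℝ) * ξ.2 = ((a - 2*c + 3*Q : ℤ) : ℝ) := by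
        rw [← hQ]; push_cast
        linear_combination (-3*(c:ℝ))*hx + (3*(a:ℝ))*hy - 3*ξ.2*hdR
      refine conclude ξ _ _ hx1 hy1 ?_
      have hs : (a+c) % 3 = 1 ∨ (a+c) % 3 = 2 := by omega
      clear hP hQ
      rcases hs with hs | hs
      · exact Or.inr ⟨by omega, by omega⟩
      · exact Or.inl ⟨by omega, by omega⟩
    -- Case B, det = -1
    · have hdR : (a:ℝ)*d - (b:ℝ)*c = -1 := by exact_mod_cast hd1
      obtain ⟨P, hP⟩ : ∃ P : ℤ, b*n - d*m = P := ⟨_, rfl⟩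
      obtain ⟨Q, hQ⟩ : ∃ Q : ℤ, c*m - a*n = Q := ⟨_, rfl⟩
      have hx1 : (3:ℝ) * ξ.1 = ((b - 2*d + 3*P : ℤ) : ℝ) := by
        rw [← hP]; push_cast
        linear_combination (-3*(d:ℝ))*hx + (3*(b:ℝ))*hy + 3*ξ.1*hdR
      have hy1 : (3:ℝ) * ξ.2 = ((2*c - a + 3*Q : ℤ) : ℝ) := by
        rw [← hQ]; push_cast
        linear_combination (3*(c:ℝ))*hx - (3*(a:ℝ))*hy + 3*ξ.2*hdR
      refine conclude ξ _ _ hx1 hy1 ?_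
      have hs : (a+c) % 3 = 1 ∨ (a+c) % 3 = 2 := by omega
      clear hP hQ
      rcases hs with hs | hs
      · exact Or.inl ⟨by omega, by omega⟩
      · exact Or.inr ⟨by omega, by omega⟩
  · rintro (⟨z, hz⟩ | ⟨z, hz⟩)
    · obtain ⟨P, hP⟩ : ∃ P : ℤ, a*z.1 + b*z.2 = P := ⟨_, rfl⟩
      obtain ⟨Q, hQ⟩ : ∃ Q : ℤ, c*z.1 + d*z.2 = Q := ⟨_, rfl⟩
      have hx1 : (3:ℝ) * (ξ.1 * (a:ℝ) + ξ.2 * (b:ℝ)) = ((a + 2*b + 3*P : ℤ) : ℝ) := by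
        rw [← hP, hz]; push_cast; ring
      have hy1 : (3:ℝ) * (ξ.1 * (c:ℝ) + ξ.2 * (d:ℝ)) = ((c + 2*d + 3*Q : ℤ) : ℝ) := by
        rw [← hQ, hz]; push_cast; ring
      refine conclude' _ _ _ _ hx1 hy1 ?_
      have hs : (a-b) % 3 = 1 ∨ (a-b) % 3 = 2 := by omega
      clear hP hQ
      rcases hs with hs | hs
      · exact Or.inl ⟨by omega, by omega⟩
      · exact Or.inr ⟨by omega, by omega⟩
    · obtain ⟨P, hP⟩ : ∃ P : ℤ, a*z.1 + b*z.2 = P := ⟨_, rfl⟩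
      obtain ⟨Q, hQ⟩ : ∃ Q : ℤ, c*z.1 + d*z.2 = Q := ⟨_, rfl⟩
      have hx1 : (3:ℝ) * (ξ.1 * (a:ℝ) + ξ.2 * (b:ℝ)) = ((2*a + 4*b + 3*P : ℤ) : ℝ) := by
        rw [← hP, hz]; push_cast; ring
      have hy1 : (3:ℝ) * (ξ.1 * (c:ℝ) + ξ.2 * (d:ℝ)) = ((2*c + 4*d + 3*Q : ℤ) : ℝ) := by
        rw [← hQ, hz]; push_cast; ring
      refine conclude' _ _ _ _ hx1 hy1 ?_
      have hs : (a-b) % 3 = 1 ∨ (a-b) % 3 = 2 := by omega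
      clear hP hQ
      rcases hs with hs | hs
      · exact Or.inr ⟨by omega, by omega⟩
      · exact Or.inl ⟨by omega, by omega⟩
end
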